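/- The one-sided infinite Sturmian word p_∞ := lim_k p_k satisfies the positivity-of-quasiweights condition (PQ) with constant 1/12: for every prefix length j ≥ 1, liminf_{L→∞} (j/L)·#_nonoverlap(p_∞[1..j], p_∞[1..L]) ≥ 1/12. -/

import Mathlib

/-- The Sturmian blocks: `s_0 = b`, `s_1 = b^{n_1 − 1} a`, `s_{k+1} = s_k^{n_{k+1}} s_{k−1}`,
over the alphabet `{a, b} = {true, false}`. -/
def sturm (n : ℕ → ℕ) : ℕ → List Bool
  | 0 => [false]
  | 1 => List.replicate (n 1 - 1) false ++ [true]
  | k + 2 => (List.replicate (n (k + 2)) (sturm n (k + 1))).flatten ++ sturm n k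

/-- `p_k` is `s_k` with its last two letters removed. -/
def pSturm (n : ℕ → ℕ) (k : ℕ) : List Bool := ((sturm n k).dropLast).dropLast

/-- The one-sided infinite Sturmian word `p_∞ = lim_k p_k`. -/
def sturmInf (n : ℕ → ℕ) : ℕ → Bool := fun i => (pSturm n (i + 4)).getD i false

/-- The prefix of length `L` of a one-sided infinite word. -/
def prefixWord {A : Type*} (ρ : ℕ → A) (L : ℕ) : List A := List.ofFn fun i : Fin L => ρ i

/-- `u` occurs in `v` starting at position `s`. -/
def occursAt {A : Type*} (u v : List A) (s : ℕ) : Prop :=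
  s + u.length ≤ v.length ∧ (v.drop s).take u.length = u

/-- The maximal number of pairwise non-overlapping occurrences of `u` in `v`. -/
noncomputable def nonoverlap {A : Type*} (u v : List A) : ℕ :=
  sSup {m : ℕ | ∃ S : Finset ℕ, S.card = m ∧ (∀ s ∈ S, occursAt u v s) ∧
    ∀ s ∈ S, ∀ t ∈ S, s ≠ t → s + u.length ≤ t ∨ t + u.length ≤ s}

namespace SturmPQAux

open List Filter

/-! ### generic list lemmas -/

lemma take_eq_of_prefix {α : Type*} {l₁ l₂ : List α} (h : l₁ <+: l₂) {t : ℕ}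
    (ht : t ≤ l₁.length) : l₂.take t = l₁.take t := by
  obtain ⟨s, rfl⟩ := h
  exact List.take_append_of_le_length ht

lemma getD_of_prefix {α : Type*} {l₁ l₂ : List α} (h : l₁ <+: l₂) {i : ℕ}
    (hi : i < l₁.length) (d : α) : l₂.getD i d = l₁.getD i d := by
  obtain ⟨s, rfl⟩ := h
  rw [List.getD_eq_getElem _ _ (by rw [List.length_append]; omega),
    List.getD_eq_getElem _ _ hi]
  exact List.getElem_append_left hi

lemma length_flatten_replicate {α : Type*} (m : ℕ) (l : List α) :
    ((List.replicate m l).flatten).length = m * l.length := by simp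

lemma flatten_replicate_succ {α : Type*} (m : ℕ) (l : List α) :
    (List.replicate (m + 1) l).flatten = l ++ (List.replicate m l).flatten := by
  rw [List.replicate_succ, List.flatten_cons]

lemma flatten_replicate_singleton {α : Type*} (m : ℕ) (x : α) :
    (List.replicate m ([x] : List α)).flatten = List.replicate m x := by
  induction m with
  | zero => simp
  | succ m ih => rw [flatten_replicate_succ, ih, List.replicate_succ]; rfl

lemma flatten_map_flatten {α β : Type*} (f : α → β) (L : List (List α)) :
    ((L.flatten).map f) = (L.map (fun l => l.map f)).flatten := by
  induction L with
  | nil => simp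
  | cons l L ih => simp [ih]

/-! ### length lemmas -/

variable (n : ℕ → ℕ) (hn : ∀ k, 1 ≤ k → 1 ≤ n k)

lemma len_zero : (sturm n 0).length = 1 := rfl

include hn in
lemma len_one : (sturm n 1).length = n 1 := by
  have := hn 1 le_rfl
  simp [sturm]; omega

lemma len_two_step (k : ℕ) :
    (sturm n (k + 2)).length = n (k + 2) * (sturm n (k + 1)).length + (sturm n k).length := by
  simp [sturm]

include hn in
lemma one_le_len : ∀ k, 1 ≤ (sturm n k).length
  | 0 => by simp [len_zero]
  | 1 => by rw [len_one n hn]; exact hn 1 le_rfl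
  | (k + 2) => by
      have := one_le_len k
      rw [len_two_step]; omega

include hn in
lemma len_add (k : ℕ) :
    (sturm n (k + 1)).length + (sturm n k).length ≤ (sturm n (k + 2)).length := by
  rw [len_two_step]
  have h1 := hn (k + 2) (by omega)
  have : 1 * (sturm n (k + 1)).length ≤ n (k + 2) * (sturm n (k + 1)).length :=
    Nat.mul_le_mul_right _ h1
  omega

include hn in
lemma len_mono (k : ℕ) : (sturm n k).length ≤ (sturm n (k + 1)).length := by
  cases k with
  | zero => rw [len_zero, len_one n hn]; exact hn 1 le_rfl
  | succ k =>
      show (sturm n (k+1)).length ≤ (sturm n (k+2)).length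
      have := len_add n hn k
      have := one_le_len n hn k
      omega

include hn in
lemma len_mono_le {k m : ℕ} (h : k ≤ m) : (sturm n k).length ≤ (sturm n m).length := by
  induction m with
  | zero => simp_all
  | succ m ih =>
      rcases Nat.lt_or_ge k (m + 1) with h' | h'
      · exact le_trans (ih (by omega)) (len_mono n hn m)
      · have : k = m + 1 := by omega
        simp [this]

include hn in
lemma len_lower : ∀ m, m + 1 ≤ (sturm n (m + 2)).length
  | 0 => one_le_len n hn 2
  | 1 => by
      show 2 ≤ (sturm n 3).length
      have h : (sturm n 2).length + (sturm n 1).length ≤ (sturm n 3).length := len_add n hn 1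
      have h1 := one_le_len n hn 1
      have h2 := one_le_len n hn 2
      omega
  | (m + 2) => by
      have h := len_add n hn (m + 2)
      have h1 : m + 2 ≤ (sturm n (m + 2 + 1)).length := len_lower (m + 1)
      have h2 := len_lower m
      omega

include hn in
lemma sturm_prefix_succ {k : ℕ} (hk : 1 ≤ k) : sturm n k <+: sturm n (k + 1) := by
  obtain ⟨k', rfl⟩ : ∃ k', k = k' + 1 := ⟨k - 1, by omega⟩
  have hpos := hn (k' + 2) (by omega)
  obtain ⟨c, hc⟩ : ∃ c, n (k' + 2) = c + 1 := ⟨n (k' + 2) - 1, by omega⟩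
  show sturm n (k' + 1) <+: sturm n (k' + 2)
  have : sturm n (k' + 2)
      = (List.replicate (n (k' + 2)) (sturm n (k' + 1))).flatten ++ sturm n k' := rfl
  rw [this, hc, flatten_replicate_succ, List.append_assoc]
  exact List.prefix_append _ _

include hn in
lemma sturm_prefix {k m : ℕ} (hk : 1 ≤ k) (hm : k ≤ m) : sturm n k <+: sturm n m := by
  induction m with
  | zero => omega
  | succ m ih =>
      rcases Nat.lt_or_ge k (m + 1) with h' | h'
      · exact (ih (by omega)).trans (sturm_prefix_succ n hn (by omega))
      · have : k = m + 1 := by omega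
        simp [this]

lemma pSturm_eq_take (m : ℕ) :
    pSturm n m = (sturm n m).take ((sturm n m).length - 2) := by
  rw [pSturm, List.dropLast_eq_take, List.dropLast_eq_take, List.take_take,
    List.length_take]
  congr 1
  omega

lemma pSturm_length (m : ℕ) : (pSturm n m).length = (sturm n m).length - 2 := by
  rw [pSturm_eq_take, List.length_take]
  omega

lemma pSturm_prefix_sturm (m : ℕ) : pSturm n m <+: sturm n m := by
  rw [pSturm_eq_take]; exact List.take_prefix _ _

include hn in
lemma pSturm_mono {m : ℕ} (hm : 1 ≤ m) : pSturm n m <+: pSturm n (m + 1) := by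
  rw [pSturm_eq_take, pSturm_eq_take]
  have hpre := sturm_prefix_succ n hn hm
  have hlen := len_mono n hn m
  have h1 : (sturm n (m + 1)).take ((sturm n m).length - 2)
      = (sturm n m).take ((sturm n m).length - 2) := take_eq_of_prefix hpre (by omega)
  rw [← h1]
  have h2 : ((sturm n m).length - 2) ≤ ((sturm n (m + 1)).length - 2) := by omega
  rw [show (sturm n (m + 1)).take ((sturm n m).length - 2)
      = ((sturm n (m + 1)).take ((sturm n (m + 1)).length - 2)).take
          ((sturm n m).length - 2) by rw [List.take_take]; congr 1; omega]
  exact List.take_prefix _ _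

include hn in
lemma pSturm_le {m m' : ℕ} (hm : 1 ≤ m) (h : m ≤ m') : pSturm n m <+: pSturm n m' := by
  induction m' with
  | zero => omega
  | succ m' ih =>
      rcases Nat.lt_or_ge m (m' + 1) with h' | h'
      · exact (ih (by omega)).trans (pSturm_mono n hn (by omega))
      · have : m = m' + 1 := by omega
        simp [this]

include hn in
lemma sturmInf_eq {i M : ℕ} (hM : 1 ≤ M) (hi : i + 2 < (sturm n M).length) :
    sturmInf n i = (sturm n M).getD i false := by
  have hl4 : i + 3 ≤ (sturm n (i + 4)).length := len_lower n hn (i + 2)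
  have h4 : i < (pSturm n (i + 4)).length := by rw [pSturm_length]; omega
  have hiM : i < (pSturm n M).length := by rw [pSturm_length]; omega
  set M' := max (i + 4) M with hM'
  have e1 : (pSturm n M').getD i false = (pSturm n (i + 4)).getD i false :=
    getD_of_prefix (pSturm_le n hn (by omega) (le_max_left _ _)) h4 _
  have e2 : (pSturm n M').getD i false = (pSturm n M).getD i false :=
    getD_of_prefix (pSturm_le n hn hM (le_max_right _ _)) hiM _
  have e3 : (sturm n M).getD i false = (pSturm n M).getD i false :=
    getD_of_prefix (pSturm_prefix_sturm n M) hiM _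
  rw [sturmInf]
  rw [← e1, e2, e3]

include hn in
lemma prefixWord_eq {L M : ℕ} (hM : 1 ≤ M) (hL : L + 2 ≤ (sturm n M).length) :
    prefixWord (sturmInf n) L = (sturm n M).take L := by
  apply List.ext_getElem
  · simp only [prefixWord, List.length_ofFn, List.length_take]; omega
  · intro i h₁ h₂
    simp only [prefixWord, List.length_ofFn] at h₁
    simp only [prefixWord]
    rw [List.getElem_ofFn, List.getElem_take]
    rw [← List.getD_eq_getElem _ false (by omega)]
    exact sturmInf_eq n hn hM (by omega)
/-! ### block decomposition -/

include hn in
lemma decomp {k : ℕ} (hk : 1 ≤ k) : ∃ (N : ℕ) (w : List Bool),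
    sturm n k = (List.replicate N (sturm n (k - 1))).flatten ++ w ∧
    1 ≤ w.length ∧ w.length ≤ (sturm n (k - 1)).length ∧
    (sturm n k).length = N * (sturm n (k - 1)).length + w.length := by
  match k with
  | 1 =>
      refine ⟨n 1 - 1, [true], ?_, by simp, by simp [len_zero], ?_⟩
      · show sturm n 1 = (List.replicate (n 1 - 1) (sturm n 0)).flatten ++ [true]
        rw [show sturm n 0 = [false] from rfl, flatten_replicate_singleton]
        rfl
      · rw [len_one n hn, len_zero]
        have := hn 1 le_rfl
        simp; omega
  | (k'' + 2) =>
      refine ⟨n (k'' + 2), sturm n k'', rfl, one_le_len n hn _, ?_, ?_⟩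
      · show (sturm n k'').length ≤ (sturm n (k'' + 1)).length
        exact len_mono n hn k''
      · show (sturm n (k'' + 2)).length
          = n (k'' + 2) * (sturm n (k'' + 1)).length + (sturm n k'').length
        exact len_two_step n (k'' + 2 - 2)

def BL (n : ℕ → ℕ) (k : ℕ) : ℕ → List Bool
  | 0 => [true]
  | 1 => List.replicate (n (k + 1)) true ++ [false]
  | (r + 2) => (List.replicate (n (k + r + 2)) (BL n k (r + 1))).flatten ++ BL n k r

/-- interpretation of a block list as a word -/
def BW (sk sk1 : List Bool) (bl : List Bool) : List Bool :=
  (bl.map (fun c => if c then sk else sk1)).flatten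

lemma BW_nil (sk sk1 : List Bool) : BW sk sk1 [] = [] := rfl

lemma BW_cons (sk sk1 : List Bool) (c : Bool) (bl : List Bool) :
    BW sk sk1 (c :: bl) = (if c then sk else sk1) ++ BW sk sk1 bl := by
  simp [BW]

lemma BW_append (sk sk1 : List Bool) (x y : List Bool) :
    BW sk sk1 (x ++ y) = BW sk sk1 x ++ BW sk sk1 y := by
  simp [BW]

lemma BW_flatten_replicate (sk sk1 : List Bool) (m : ℕ) (bl : List Bool) :
    BW sk sk1 ((List.replicate m bl).flatten)
      = (List.replicate m (BW sk sk1 bl)).flatten := by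
  induction m with
  | zero => simp [BW]
  | succ m ih =>
      rw [flatten_replicate_succ, flatten_replicate_succ, BW_append, ih]

lemma BL_join {k : ℕ} (hk : 1 ≤ k) :
    ∀ r : ℕ, BW (sturm n k) (sturm n (k - 1)) (BL n k r) = sturm n (k + r)
  | 0 => by simp [BL, BW]
  | 1 => by
      obtain ⟨k', rfl⟩ : ∃ k', k = k' + 1 := ⟨k - 1, by omega⟩
      rw [BL, BW_append, BW]
      have h1 : ∀ m : ℕ, (List.replicate m true).map
          (fun c => if c then sturm n (k' + 1) else sturm n (k' + 1 - 1))
          = List.replicate m (sturm n (k' + 1)) := by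
        intro m; rw [List.map_replicate]; rfl
      rw [h1]
      show (List.replicate (n (k' + 1 + 1)) (sturm n (k' + 1))).flatten
          ++ BW (sturm n (k' + 1)) (sturm n (k' + 1 - 1)) [false] = sturm n (k' + 1 + 1)
      have h2 : BW (sturm n (k' + 1)) (sturm n (k' + 1 - 1)) [false] = sturm n k' := by
        simp [BW]
      rw [h2]
      rfl
  | (r + 2) => by
      rw [BL, BW_append, BW_flatten_replicate, BL_join hk (r + 1), BL_join hk r]
      show (List.replicate (n (k + r + 2)) (sturm n (k + (r + 1)))).flatten
          ++ sturm n (k + r) = sturm n (k + (r + 2))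
      have h1 : k + (r + 2) = (k + r) + 2 := by omega
      have h2 : k + (r + 1) = (k + r) + 1 := by omega
      rw [h1, h2]
      rfl

/-- the chain condition: no two adjacent `false` (i.e. `s_{k-1}`) blocks -/
def RB : Bool → Bool → Prop := fun x y => x = true ∨ y = true

def PB (bl : List Bool) : Prop := bl.Chain' RB ∧ bl.head? = some true

lemma PB_append {x y : List Bool} (hx : PB x) (hy : PB y) : PB (x ++ y) := by
  obtain ⟨a, x', rfl⟩ : ∃ a x', x = a :: x' := by
    rcases x with _ | ⟨a, x'⟩
    · exact absurd hx.2 (by simp)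
    · exact ⟨a, x', rfl⟩
  have ha : a = true := by
    have h := hx.2; simp only [List.head?_cons, Option.some.injEq] at h; exact h
  constructor
  · change List.IsChain RB (a :: x' ++ y); rw [List.isChain_append]
    refine ⟨hx.1, hy.1, ?_⟩
    intro p hp q hq
    right
    rcases y with _ | ⟨b, y'⟩
    · simp at hq
    · have hb : b = true := by
        have h := hy.2; simp only [List.head?_cons, Option.some.injEq] at h; exact h
      simp only [List.head?_cons, Option.mem_def, Option.some.injEq] at hq
      rw [← hq]; exact hb
  · simp [ha]

lemma PB_flatten_replicate {bl t : List Bool} (hbl : PB bl) (ht : PB t) (m : ℕ) :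
    PB ((List.replicate m bl).flatten ++ t) := by
  induction m with
  | zero => simpa using ht
  | succ m ih =>
      rw [flatten_replicate_succ, List.append_assoc]
      exact PB_append hbl ih

lemma chain'_replicate_true (m : ℕ) {l : List Bool} (h : l.Chain' RB) :
    (List.replicate m true ++ l).Chain' RB := by
  induction m with
  | zero => simpa using h
  | succ m ih =>
      show List.IsChain RB _
      rw [List.replicate_succ, List.cons_append, List.isChain_cons]
      exact ⟨fun y _ => Or.inl rfl, ih⟩

include hn in
lemma PB_BL (k : ℕ) : ∀ r, PB (BL n k r)
  | 0 => ⟨by simp [BL, List.Chain'], rfl⟩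
  | 1 => by
      obtain ⟨c, hc⟩ : ∃ c, n (k + 1) = c + 1 := ⟨n (k + 1) - 1, by have := hn (k + 1) (by omega); omega⟩
      constructor
      · exact chain'_replicate_true _ (by simp [List.Chain'])
      · rw [BL, hc, List.replicate_succ]
        rfl
  | (r + 2) => PB_flatten_replicate (PB_BL k (r + 1)) (PB_BL k r) _
/-! ### occurrences inside a block -/

omit hn

lemma inside_take {α : Type*} (v w : List α) (N i t : ℕ) (hv : 0 < v.length)
    (h : i * v.length + t + w.length ≤ N * v.length + w.length) :
    (((List.replicate N v).flatten ++ w).drop (i * v.length)).take t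
      = ((List.replicate N v).flatten ++ w).take t := by
  have hiN : i ≤ N := by
    by_contra hc
    push_neg at hc
    have : N * v.length < i * v.length := (Nat.mul_lt_mul_right hv).2 hc
    omega
  have hsplit : List.replicate N v = List.replicate i v ++ List.replicate (N - i) v := by
    rw [← List.replicate_add]; congr 1; omega
  have hsplit' : List.replicate N v = List.replicate (N - i) v ++ List.replicate i v := by
    rw [← List.replicate_add]; congr 1; omega
  have hNia : i * v.length + (N - i) * v.length = N * v.length := by
    rw [← Nat.add_mul]; congr 1; omega
  have hta : t ≤ (N - i) * v.length := by omega
  have hdrop : (((List.replicate N v).flatten ++ w).drop (i * v.length))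
      = (List.replicate (N - i) v).flatten ++ w := by
    conv_lhs => rw [hsplit, List.flatten_append, List.append_assoc]
    rw [← length_flatten_replicate i v, List.drop_left]
  rw [hdrop]
  rw [List.take_append_of_le_length (by rw [length_flatten_replicate]; omega),
    List.take_append_of_le_length (by rw [length_flatten_replicate]; omega)]
  conv_rhs => rw [hsplit', List.flatten_append]
  rw [List.take_append_of_le_length (by rw [length_flatten_replicate]; omega)]

lemma occursAt_append_right {u B V : List Bool} {g : ℕ} (h : occursAt u V g) :
    occursAt u (B ++ V) (B.length + g) := by
  obtain ⟨h1, h2⟩ := h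
  constructor
  · rw [List.length_append]; omega
  · rw [List.drop_append, List.drop_eq_nil_of_le (by omega)]
    simpa using h2

lemma occursAt_take {u W : List Bool} {g L : ℕ} (h : occursAt u W g)
    (hL : g + u.length ≤ L) (hLW : L ≤ W.length) : occursAt u (W.take L) g := by
  obtain ⟨h1, h2⟩ := h
  constructor
  · rw [List.length_take]; omega
  · rw [List.drop_take, List.take_take, min_eq_left (by omega)]
    exact h2
lemma BW_cons_true (sk sk1 : List Bool) (bl : List Bool) :
    BW sk sk1 (true :: bl) = sk ++ BW sk sk1 bl := by simp [BW]

lemma BW_cons_false (sk sk1 : List Bool) (bl : List Bool) :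
    BW sk sk1 (false :: bl) = sk1 ++ BW sk sk1 bl := by simp [BW]

lemma main' (u sk sk1 : List Bool) (j a' : ℕ)
    (hj : 1 ≤ j) (hulen : u.length = j)
    (hapos : 0 < sk1.length) (haj : sk1.length ≤ j) (ha'j : a' ≤ j)
    (hjA : j < sk.length)
    (h0 : sk.take j = u)
    (h1 : ∀ i : ℕ, i * sk1.length + j + a' ≤ sk.length →
      (sk.drop (i * sk1.length)).take j = u) :
    ∀ (bl : List Bool), bl.Chain' RB →
      ∀ X : ℕ, X + 5 * j ≤ (BW sk sk1 bl).length →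
      ∃ g, X ≤ g ∧ g ≤ X + 4 * j ∧ occursAt u (BW sk sk1 bl) g := by
  intro bl
  induction bl with
  | nil =>
      intro _ X hX
      rw [BW_nil] at hX
      simp at hX
      omega
  | cons c rest ih =>
      intro hch X hX
      have hch' : rest.Chain' RB := hch.tail
      cases c with
      | false =>
          rw [BW_cons_false] at hX ⊢
          by_cases hXB : sk1.length ≤ X
          · obtain ⟨g', hg1, hg2, hocc⟩ := ih hch' (X - sk1.length)
              (by rw [List.length_append] at hX; omega)
            exact ⟨sk1.length + g', by omega, by omega, occursAt_append_right hocc⟩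
          · push_neg at hXB
            rcases rest with _ | ⟨c₂, rest₂⟩
            · rw [BW_nil] at hX
              rw [List.length_append] at hX
              simp at hX
              omega
            · have hc₂ : c₂ = true := by
                simp only [List.Chain', List.isChain_cons_cons] at hch
                rcases hch.1 with h | h
                · exact absurd h (by simp)
                · exact h
              subst hc₂
              refine ⟨sk1.length, by omega, by omega, ?_⟩
              constructor
              · rw [List.length_append, BW_cons_true, List.length_append, hulen]
                omega
              · rw [List.drop_left, BW_cons_true, hulen,
                  List.take_append_of_le_length (by omega), h0]
      | true =>
          rw [BW_cons_true] at hX ⊢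
          by_cases hXB : sk.length ≤ X
          · obtain ⟨g', hg1, hg2, hocc⟩ := ih hch' (X - sk.length)
              (by rw [List.length_append] at hX; omega)
            exact ⟨sk.length + g', by omega, by omega, occursAt_append_right hocc⟩
          · push_neg at hXB
            have hle : (X / sk1.length) * sk1.length ≤ X := Nat.div_mul_le_self X _
            have hlt : X < X / sk1.length * sk1.length + sk1.length :=
              Nat.lt_div_mul_add hapos
            have hmul : (X / sk1.length + 1) * sk1.length
                = (X / sk1.length) * sk1.length + sk1.length := by ring
            by_cases hgood :
                (X / sk1.length + 1) * sk1.length + j + a' ≤ sk.length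
            · refine ⟨(X / sk1.length + 1) * sk1.length, by omega, by omega, ?_⟩
              constructor
              · rw [List.length_append, hulen]; omega
              · rw [List.drop_append,
                  Nat.sub_eq_zero_of_le (by omega), List.drop_zero,
                  hulen,
                  List.take_append_of_le_length (by rw [List.length_drop]; omega)]
                exact h1 (X / sk1.length + 1) hgood
            · push_neg at hgood
              have hA3 : sk.length < X + 3 * j := by omega
              rcases rest with _ | ⟨c₂, rest₂⟩
              · rw [BW_nil] at hX
                rw [List.length_append] at hX
                simp at hX
                omega
              · cases c₂ with
                | true =>
                    refine ⟨sk.length, by omega, by omega, ?_⟩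
                    constructor
                    · rw [List.length_append, BW_cons_true, List.length_append, hulen]
                      omega
                    · rw [List.drop_left, BW_cons_true, hulen,
                        List.take_append_of_le_length (by omega), h0]
                | false =>
                    rcases rest₂ with _ | ⟨c₃, rest₃⟩
                    · rw [BW_cons_false, BW_nil] at hX
                      rw [List.length_append, List.length_append] at hX
                      simp at hX
                      omega
                    · have hc₃ : c₃ = true := by
                        have h2 := (List.isChain_cons_cons.mp hch).2
                        rcases (List.isChain_cons_cons.mp h2).1 with h | h
                        · exact absurd h (by simp)
                        · exact h
                      subst hc₃
                      refine ⟨sk.length + sk1.length, by omega, by omega, ?_⟩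
                      constructor
                      · rw [List.length_append, BW_cons_false, BW_cons_true,
                          List.length_append, List.length_append, hulen]
                        omega
                      · rw [BW_cons_false, ← List.append_assoc,
                          show sk.length + sk1.length = (sk ++ sk1).length by
                            rw [List.length_append],
                          List.drop_left, BW_cons_true, hulen,
                          List.take_append_of_le_length (by omega), h0]

/-! ### bounds on nonoverlap -/

lemma mem_nonoverlap_bound {u v : List Bool} (hu : 1 ≤ u.length) {m : ℕ}
    (hm : ∃ S : Finset ℕ, S.card = m ∧ (∀ s ∈ S, occursAt u v s) ∧
      ∀ s ∈ S, ∀ t ∈ S, s ≠ t → s + u.length ≤ t ∨ t + u.length ≤ s) :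
    m ≤ v.length := by
  obtain ⟨S, hcard, hocc, -⟩ := hm
  have hsub : S ⊆ Finset.range v.length := by
    intro s hs
    have h := (hocc s hs).1
    rw [Finset.mem_range]; omega
  calc m = S.card := hcard.symm
    _ ≤ (Finset.range v.length).card := Finset.card_le_card hsub
    _ = v.length := Finset.card_range _

lemma nonoverlap_le {u v : List Bool} (hu : 1 ≤ u.length) :
    nonoverlap u v ≤ v.length := by
  unfold nonoverlap
  apply csSup_le
  · exact ⟨0, ∅, by simp⟩
  · rintro m hm
    exact mem_nonoverlap_bound hu hm

lemma nonoverlap_ge {u v : List Bool} (hu : 1 ≤ u.length) (S : Finset ℕ)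
    (hocc : ∀ s ∈ S, occursAt u v s)
    (hsep : ∀ s ∈ S, ∀ t ∈ S, s ≠ t → s + u.length ≤ t ∨ t + u.length ≤ s) :
    S.card ≤ nonoverlap u v := by
  unfold nonoverlap
  exact le_csSup ⟨v.length, fun _ hm => mem_nonoverlap_bound hu hm⟩ ⟨S, rfl, hocc, hsep⟩

end SturmPQAux


open SturmPQAux in
/-- The Sturmian word `p_∞` satisfies the positivity-of-quasiweights condition (PQ) with
constant `1/12`: for every prefix length `j ≥ 1`,
`liminf_{L→∞} (j/L)·#_nonoverlap(p_∞[1..j], p_∞[1..L]) ≥ 1/12`. -/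
theorem sturm_PQ (n : ℕ → ℕ) (hn : ∀ k, 1 ≤ k → 1 ≤ n k) (j : ℕ) (hj : 1 ≤ j) :
    (1 : ℝ) / 12 ≤ Filter.liminf (fun L : ℕ =>
      (j : ℝ) / (L : ℝ) *
        (nonoverlap (prefixWord (sturmInf n) j) (prefixWord (sturmInf n) L) : ℝ))
      Filter.atTop := by
  classical
  have hulen : (prefixWord (sturmInf n) j).length = j := by
    simp [prefixWord]
  -- choice of the level k (named K)
  have hex : ∃ k, j < (sturm n k).length :=
    ⟨2 * j + 2, by have := len_lower n hn (2 * j); omega⟩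
  set K := Nat.find hex with hKdef
  have hKj : j < (sturm n K).length := Nat.find_spec hex
  have hK1 : 1 ≤ K := by
    rcases Nat.eq_zero_or_pos K with h | h
    · exfalso
      have h2 := hKj
      rw [h, len_zero] at h2
      omega
    · exact h
  have hKmin : (sturm n (K - 1)).length ≤ j := by
    have h := Nat.find_min hex (show K - 1 < K by omega)
    omega
  have hapos : 0 < (sturm n (K - 1)).length := one_le_len n hn _
  -- decomposition of s_K
  obtain ⟨N, w, hdec, hw1, hwle, hlen⟩ := decomp n hn hK1
  -- u is a prefix of s_K
  have hMu : j + 2 ≤ (sturm n (K + j + 2)).length := by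
    have := len_lower n hn (K + j); omega
  have hu_take : (sturm n K).take j = prefixWord (sturmInf n) j := by
    rw [prefixWord_eq n hn (M := K + j + 2) (by omega) hMu]
    exact (take_eq_of_prefix (sturm_prefix n hn hK1 (by omega)) (by omega)).symm
  -- occurrences inside s_K
  have hinside : ∀ i : ℕ, i * (sturm n (K - 1)).length + j + w.length ≤ (sturm n K).length →
      ((sturm n K).drop (i * (sturm n (K - 1)).length)).take j = prefixWord (sturmInf n) j := by
    intro i hi
    have h' : i * (sturm n (K - 1)).length + j + w.length
        ≤ N * (sturm n (K - 1)).length + w.length := by omega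
    calc ((sturm n K).drop (i * (sturm n (K - 1)).length)).take j
        = (((List.replicate N (sturm n (K - 1))).flatten ++ w).drop
            (i * (sturm n (K - 1)).length)).take j := by rw [← hdec]
      _ = ((List.replicate N (sturm n (K - 1))).flatten ++ w).take j :=
          inside_take _ _ _ _ _ hapos h'
      _ = (sturm n K).take j := by rw [← hdec]
      _ = prefixWord (sturmInf n) j := hu_take
  -- global upper bound (for coboundedness)
  have hupper : ∀ L : ℕ, (j : ℝ) / (L : ℝ) *
      (nonoverlap (prefixWord (sturmInf n) j) (prefixWord (sturmInf n) L) : ℝ) ≤ j := by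
    intro L
    rcases Nat.eq_zero_or_pos L with h0 | hL
    · subst h0; simp
    · have hno : nonoverlap (prefixWord (sturmInf n) j) (prefixWord (sturmInf n) L) ≤ L := by
        have h := nonoverlap_le (u := prefixWord (sturmInf n) j)
          (v := prefixWord (sturmInf n) L) (by omega)
        simpa [prefixWord] using h
      have hLpos : (0 : ℝ) < L := by exact_mod_cast hL
      rw [div_mul_eq_mul_div, div_le_iff₀ hLpos]
      have h1 : (nonoverlap (prefixWord (sturmInf n) j) (prefixWord (sturmInf n) L) : ℝ)
          ≤ (L : ℝ) := by exact_mod_cast hno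
      have h2 : (0:ℝ) ≤ (j : ℝ) := by positivity
      nlinarith
  apply Filter.le_liminf_of_le
  · exact Filter.IsBoundedUnder.isCoboundedUnder_ge
      (Filter.isBoundedUnder_of ⟨(j : ℝ), hupper⟩)
  · filter_upwards [Filter.eventually_ge_atTop (9 * j)] with L hL9
    -- the long word W
    have hMlen : L + 2 ≤ (sturm n (K + (L + 2))).length := by
      have h := len_lower n hn (K + L)
      have he : K + (L + 2) = (K + L) + 2 := by omega
      rw [he]; omega
    have hWL : L ≤ (sturm n (K + (L + 2))).length := by omega
    have hpw : prefixWord (sturmInf n) L = (sturm n (K + (L + 2))).take L :=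
      prefixWord_eq n hn (by omega) hMlen
    have hWBW : BW (sturm n K) (sturm n (K - 1)) (BL n K (L + 2)) = sturm n (K + (L + 2)) :=
      BL_join n hK1 (L + 2)
    have hchain := (PB_BL n hn K (L + 2)).1
    have hdivmul : (L / (5 * j)) * (5 * j) ≤ L := Nat.div_mul_le_self L (5 * j)
    have hmainall : ∀ q : ℕ, ∃ g : ℕ, q < L / (5 * j) →
        (5 * j * q ≤ g ∧ g ≤ 5 * j * q + 4 * j ∧
          occursAt (prefixWord (sturmInf n) j) (sturm n (K + (L + 2))) g) := by
      intro q
      by_cases hq : q < L / (5 * j)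
      · have hX : 5 * j * q + 5 * j ≤ (sturm n (K + (L + 2))).length := by
          have h1 : 5 * j * (q + 1) ≤ 5 * j * (L / (5 * j)) :=
            Nat.mul_le_mul_left _ (by omega)
          have e1 : 5 * j * (q + 1) = 5 * j * q + 5 * j := by ring
          have e2 : 5 * j * (L / (5 * j)) = (L / (5 * j)) * (5 * j) := by ring
          omega
        obtain ⟨g, hg1, hg2, hg3⟩ := main' (prefixWord (sturmInf n) j) (sturm n K)
          (sturm n (K - 1)) j w.length hj hulen hapos hKmin (hwle.trans hKmin) hKj
          hu_take hinside (BL n K (L + 2)) hchain (5 * j * q) (by rw [hWBW]; exact hX)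
        rw [hWBW] at hg3
        exact ⟨g, fun _ => ⟨hg1, hg2, hg3⟩⟩
      · exact ⟨0, fun h => absurd h hq⟩
    choose pos hpos using hmainall
    have hsep : ∀ q, q < L / (5 * j) → ∀ q', q' < L / (5 * j) → q < q' →
        pos q + j ≤ pos q' := by
      intro q hq q' hq' hlt
      obtain ⟨h1, h2, -⟩ := hpos q hq
      obtain ⟨h1', h2', -⟩ := hpos q' hq'
      have h3 : 5 * j * (q + 1) ≤ 5 * j * q' := Nat.mul_le_mul_left _ (by omega)
      have e : 5 * j * (q + 1) = 5 * j * q + 5 * j := by ring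
      omega
    have hposL : ∀ q, q < L / (5 * j) → pos q + j ≤ L := by
      intro q hq
      obtain ⟨-, h2, -⟩ := hpos q hq
      have h3 : 5 * j * (q + 1) ≤ 5 * j * (L / (5 * j)) := Nat.mul_le_mul_left _ (by omega)
      have e1 : 5 * j * (q + 1) = 5 * j * q + 5 * j := by ring
      have e2 : 5 * j * (L / (5 * j)) = (L / (5 * j)) * (5 * j) := by ring
      omega
    have hcard : ((Finset.range (L / (5 * j))).image pos).card = L / (5 * j) := by
      rw [Finset.card_image_of_injOn, Finset.card_range]
      intro q hq q' hq' he
      simp only [Finset.coe_range, Set.mem_Iio] at hq hq'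
      by_contra hne
      rcases Nat.lt_or_ge q q' with h | h
      · have := hsep q hq q' hq' h; omega
      · have := hsep q' hq' q hq (by omega); omega
    have hQle : L / (5 * j) ≤
        nonoverlap (prefixWord (sturmInf n) j) (prefixWord (sturmInf n) L) := by
      rw [← hcard]
      apply nonoverlap_ge (by omega)
      · intro s hs
        simp only [Finset.mem_image, Finset.mem_range] at hs
        obtain ⟨q, hq, rfl⟩ := hs
        obtain ⟨-, -, h3⟩ := hpos q hq
        rw [hpw]
        exact occursAt_take h3 (by rw [hulen]; exact hposL q hq) hWL
      · intro s hs t ht hne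
        simp only [Finset.mem_image, Finset.mem_range] at hs ht
        obtain ⟨q, hq, rfl⟩ := hs
        obtain ⟨q', hq', rfl⟩ := ht
        rcases lt_trichotomy q q' with h | h | h
        · left; rw [hulen]; exact hsep q hq q' hq' h
        · exact absurd (by rw [h]) hne
        · right; rw [hulen]; exact hsep q' hq' q hq h
    -- numerics
    have hLpos : (0 : ℝ) < L := by
      have : 9 ≤ L := by omega
      exact_mod_cast (by omega : 0 < L)
    rw [div_mul_eq_mul_div, le_div_iff₀ hLpos]
    have hc : ((L / (5 * j) : ℕ) : ℝ) ≤
        (nonoverlap (prefixWord (sturmInf n) j) (prefixWord (sturmInf n) L) : ℝ) := by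
      exact_mod_cast hQle
    have h5 : (L : ℝ) < 5 * j * ((L / (5 * j) : ℕ) : ℝ) + 5 * j := by
      have h := Nat.lt_div_mul_add (a := L) (b := 5 * j) (by omega)
      have := (Nat.cast_lt (α := ℝ)).2 h
      push_cast at this
      nlinarith [this]
    have h9 : (9 : ℝ) * j ≤ L := by exact_mod_cast hL9
    have hjR : (1 : ℝ) ≤ j := by exact_mod_cast hj
    have hQ0 : (0 : ℝ) ≤ ((L / (5 * j) : ℕ) : ℝ) := by positivity
    have hmono : (j : ℝ) * ((L / (5 * j) : ℕ) : ℝ) ≤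
        (j : ℝ) * (nonoverlap (prefixWord (sturmInf n) j) (prefixWord (sturmInf n) L) : ℝ) :=
      mul_le_mul_of_nonneg_left hc (by positivity)
    nlinarith [hmono, h5, h9, hjR, hQ0]
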